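/- arXiv:2207.07892 — 2 statements merged into one kernel-verified Lean document; each statement's English description precedes it below -/
import Mathlib

section
/- Let w' < w be valuations on K(X) with w' taking values in a subgroup of the value group of w. Then: (i) Φ(w', w) = [φ]_{w'} for every φ ∈ Φ(w', w); (ii) if w' < ν ≤ w is a chain of valuations, then Φ(w', w) = Φ(w', ν), and in particular, for every f ∈ K[X], w'(f) = w(f) if and only if w'(f) = ν(f). -/
namespace MLV

open Polynomial

/-- An additive valuation on a commutative ring `R` with values in `Γ ∪ {∞}`
(written additively, with the `min` convention), thought of as the restriction
to `R` of a valuation on its fraction field. -/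
structure ValOn (R : Type*) [CommRing R] (Γ : Type*) [AddCommGroup Γ] [LinearOrder Γ] [IsOrderedAddMonoid Γ] where
  toFun : R → WithTop Γ
  map_zero' : toFun 0 = ⊤
  ne_top' : ∀ f : R, f ≠ 0 → toFun f ≠ ⊤
  map_mul' : ∀ f g : R, toFun (f * g) = toFun f + toFun g
  add_min' : ∀ f g : R, min (toFun f) (toFun g) ≤ toFun (f + g)

variable {K : Type*} [Field K] {Γ : Type*} [AddCommGroup Γ] [LinearOrder Γ] [IsOrderedAddMonoid Γ]

/-- `w` (a valuation on `K(X)`, restricted to `K[X]`) extends the valuation `v` of `K`. -/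
def Extends (w : ValOn (Polynomial K) Γ) (v : ValOn K Γ) : Prop :=
  ∀ c : K, w.toFun (C c) = v.toFun c

/-- `wbar` (a valuation on `K̄(X)`) is a common extension of `w` and of `vbar`. -/
def IsCommonExt {L : Type*} [Field L] [Algebra K L]
    (wbar : ValOn (Polynomial L) Γ) (w : ValOn (Polynomial K) Γ) (vbar : ValOn L Γ) : Prop :=
  (∀ f : Polynomial K, wbar.toFun (f.map (algebraMap K L)) = w.toFun f) ∧
  (∀ c : L, wbar.toFun (C c) = vbar.toFun c)

/-- `δ(f) = max { w̄(X - α) : α ∈ K̄, f(α) = 0 }` (as an element of `WithBot (WithTop Γ)`,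
the value `⊥` corresponding to a polynomial without roots). -/
noncomputable def delta {L : Type*} [Field L] [Algebra K L]
    (wbar : ValOn (Polynomial L) Γ) (f : Polynomial K) : WithBot (WithTop Γ) :=
  (((f.map (algebraMap K L)).roots).map
    fun α => ((wbar.toFun (X - C α) : WithTop Γ) : WithBot (WithTop Γ))).sup

/-- `Q` is an abstract key polynomial for `w` (with respect to the common extension `wbar`
computing `δ`): `Q` is monic and `δ(f) < δ(Q)` for every nonzero `f` with `deg f < deg Q`. -/
def IsABKP {L : Type*} [Field L] [Algebra K L]
    (wbar : ValOn (Polynomial L) Γ) (Q : Polynomial K) : Prop :=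
  Q.Monic ∧ ∀ f : Polynomial K, f ≠ 0 → f.degree < Q.degree → delta wbar f < delta wbar Q

/-- The `Q`-truncation `w_Q` of `w`: on the `Q`-expansion `f = ∑ fᵢ Qⁱ` it equals
`min_i w(fᵢ Qⁱ)`. -/
noncomputable def truncVal (w : ValOn (Polynomial K) Γ) (Q f : Polynomial K) : WithTop Γ :=
  (Finset.range (f.natDegree + 1)).inf fun i => w.toFun ((f /ₘ Q ^ i) %ₘ Q * Q ^ i)

/-- `f ∼_u g` : `u(f - g) > u f = u g`. -/
def EquivMod (u : Polynomial K → WithTop Γ) (f g : Polynomial K) : Prop :=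
  u f < u (f - g) ∧ u f = u g

/-- `f ∣_u g` : `g ∼_u f h` for some `h`. -/
def DvdMod (u : Polynomial K → WithTop Γ) (f g : Polynomial K) : Prop :=
  ∃ h : Polynomial K, EquivMod u g (f * h)

/-- A key polynomial for `u`: monic, `u`-irreducible and `u`-minimal. -/
def IsKeyPol (u : Polynomial K → WithTop Γ) (φ : Polynomial K) : Prop :=
  φ.Monic ∧
  (∀ h q : Polynomial K, DvdMod u φ (h * q) → DvdMod u φ h ∨ DvdMod u φ q) ∧
  (∀ h : Polynomial K, h ≠ 0 → DvdMod u φ h → φ.degree ≤ h.degree)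

/-- A key polynomial for `u` of minimal degree (i.e. of degree `deg(u)`). -/
def IsMinKeyPol (u : Polynomial K → WithTop Γ) (φ : Polynomial K) : Prop :=
  IsKeyPol u φ ∧ ∀ ψ : Polynomial K, IsKeyPol u ψ → φ.degree ≤ ψ.degree

/-- `u ≤ u'` pointwise on `K[X]`. -/
def FnLe (u u' : Polynomial K → WithTop Γ) : Prop :=
  ∀ f : Polynomial K, u f ≤ u' f

/-- `u < u'` : `u ≤ u'` and `u f < u' f` for some `f`. -/
def FnLt (u u' : Polynomial K → WithTop Γ) : Prop :=
  FnLe u u' ∧ ∃ f : Polynomial K, u f < u' f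

/-- `g ∈ Φ(u, u')` : `g` is monic of minimal degree with `u g < u' g`. -/
def InPhi (u u' : Polynomial K → WithTop Γ) (g : Polynomial K) : Prop :=
  g.Monic ∧ u g < u' g ∧
  ∀ h : Polynomial K, h.Monic → u h < u' h → g.degree ≤ h.degree

/-- The value at `f` of the augmented valuation `[u; φ, γ]`, computed via the
`φ`-expansion `f = ∑ fᵢ φⁱ` as `min_i (u fᵢ + i γ)`. -/
noncomputable def augVal (u : Polynomial K → WithTop Γ) (φ : Polynomial K) (γ : Γ)
    (f : Polynomial K) : WithTop Γ :=
  (Finset.range (f.natDegree + 1)).inf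
    fun i => u ((f /ₘ φ ^ i) %ₘ φ) + i • ((γ : WithTop Γ))

/-- `u' = [u; φ, γ]` is the ordinary augmentation of `u` at the key polynomial `φ`
with value `γ > u φ`. -/
def IsOrdAug (u : Polynomial K → WithTop Γ) (φ : Polynomial K) (γ : Γ)
    (u' : Polynomial K → WithTop Γ) : Prop :=
  IsKeyPol u φ ∧ u φ < (γ : WithTop Γ) ∧ ∀ f : Polynomial K, u' f = augVal u φ γ f

/-- A continuous family of augmentations `(ρ_i = [w'; χ_i, γ_i])_{i ∈ ι}` of `w'`. -/
structure ContFamily (w' : ValOn (Polynomial K) Γ) (ι : Type*) [LinearOrder ι] where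
  chi : ι → Polynomial K
  gam : ι → Γ
  rho : ι → ValOn (Polynomial K) Γ
  no_last : ∀ i : ι, ∃ j : ι, i < j
  gam_mono : StrictMono gam
  aug : ∀ i : ι, IsOrdAug w'.toFun (chi i) (gam i) (rho i).toFun
  deg_eq : ∀ i j : ι, (chi i).degree = (chi j).degree
  key_step : ∀ i j : ι, i < j → IsKeyPol (rho i).toFun (chi j)
  not_equiv : ∀ i j : ι, i < j → ¬ EquivMod (rho i).toFun (chi j) (chi i)
  step : ∀ i j : ι, i < j → IsOrdAug (rho i).toFun (chi j) (gam j) (rho j).toFun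

/-- `f` is `W`-stable with stable value `c`. -/
def StableAt {w' : ValOn (Polynomial K) Γ} {ι : Type*} [LinearOrder ι]
    (F : ContFamily w' ι) (f : Polynomial K) (c : WithTop Γ) : Prop :=
  ∃ i0 : ι, ∀ i : ι, i0 ≤ i → (F.rho i).toFun f = c

/-- `f` is `W`-stable. -/
def IsStable {w' : ValOn (Polynomial K) Γ} {ι : Type*} [LinearOrder ι]
    (F : ContFamily w' ι) (f : Polynomial K) : Prop :=
  ∃ c : WithTop Γ, StableAt F f c

/-- The valuation `w` is the stable limit of the family `F`. -/
def IsStableLimit {w' : ValOn (Polynomial K) Γ} {ι : Type*} [LinearOrder ι]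
    (F : ContFamily w' ι) (w : ValOn (Polynomial K) Γ) : Prop :=
  ∀ f : Polynomial K, StableAt F f (w.toFun f)

/-- `Q` is a MacLane–Vaquié limit key polynomial for `F`: monic, `F`-unstable,
of minimal degree among unstable polynomials. -/
def IsLimitKP {w' : ValOn (Polynomial K) Γ} {ι : Type*} [LinearOrder ι]
    (F : ContFamily w' ι) (Q : Polynomial K) : Prop :=
  Q.Monic ∧ ¬ IsStable F Q ∧ ∀ g : Polynomial K, ¬ IsStable F g → Q.degree ≤ g.degree

/-- The continuous family `F` is essential: `deg(W) < m_∞ < ∞`. -/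
def IsEssential {w' : ValOn (Polynomial K) Γ} {ι : Type*} [LinearOrder ι]
    (F : ContFamily w' ι) : Prop :=
  (∃ f : Polynomial K, ¬ IsStable F f) ∧
  ∀ (i : ι) (f : Polynomial K), ¬ IsStable F f → (F.chi i).degree < f.degree

/-- `w = [F; Q, γ]` is the limit augmentation of the family `F` at the limit key
polynomial `Q` with value `γ`: on `Q`-expansions, `w f = min_i (ρ_W(fᵢ) + iγ)`, which
since the coefficients are stable is the eventual value of `[ρ_i; Q, γ]` on `f`. -/
def IsLimitAug {w' : ValOn (Polynomial K) Γ} {ι : Type*} [LinearOrder ι]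
    (F : ContFamily w' ι) (Q : Polynomial K) (γ : Γ)
    (w : ValOn (Polynomial K) Γ) : Prop :=
  IsLimitKP F Q ∧ (∀ i : ι, (F.rho i).toFun Q < (γ : WithTop Γ)) ∧
  ∀ f : Polynomial K, ∃ i0 : ι, ∀ i : ι, i0 ≤ i → w.toFun f = augVal (F.rho i).toFun Q γ f

/-- `w` is a depth-zero valuation `w_{α,δ}` over `v`. -/
def IsDepthZero (v : ValOn K Γ) (w : ValOn (Polynomial K) Γ) : Prop :=
  ∃ (α : K) (d : Γ), ∀ f : Polynomial K,
    w.toFun f = (Finset.range (f.natDegree + 1)).inf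
      fun i => v.toFun (((Polynomial.taylor α) f).coeff i) + i • ((d : WithTop Γ))

/-- An ordinary augmentation step of a MacLane–Vaquié chain:
`u' = [u; φ, γ]` with `deg(u) < deg Φ(u, u')`. -/
def OrdMLVStep (u u' : Polynomial K → WithTop Γ) (φ : Polynomial K) (γ : Γ) : Prop :=
  IsOrdAug u φ γ u' ∧
  ∀ ψ g : Polynomial K, IsMinKeyPol u ψ → InPhi u u' g → ψ.degree < g.degree

/-- A limit augmentation step of a MacLane–Vaquié chain, with the underlying essential
continuous family `F` made explicit: `w = [F; φ, γ]`, `deg(w') = deg Φ(w', w)` and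
`φprev ∉ Φ(w', w)`. -/
def LimMLVStepWith {w' : ValOn (Polynomial K) Γ} {ι : Type*} [LinearOrder ι]
    (F : ContFamily w' ι) (w : ValOn (Polynomial K) Γ)
    (φprev φ : Polynomial K) (γ : Γ) : Prop :=
  IsEssential F ∧ IsLimitAug F φ γ w ∧
  (∀ ψ g : Polynomial K, IsMinKeyPol w'.toFun ψ → InPhi w'.toFun w.toFun g →
    ψ.degree = g.degree) ∧
  ¬ InPhi w'.toFun w.toFun φprev

/-- A limit augmentation step of a MacLane–Vaquié chain (the underlying essential
continuous family being existentially quantified). -/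
def LimMLVStep (w' w : ValOn (Polynomial K) Γ) (φprev φ : Polynomial K) (γ : Γ) : Prop :=
  ∃ (ι : Type) (li : LinearOrder ι) (F : @ContFamily K _ Γ _ _ _ w' ι li),
    @LimMLVStepWith K _ Γ _ _ _ w' ι li F w φprev φ γ

/-- Membership in the index set `I`: `I = ℕ` if `o = none`, and `I = {0, …, N}`
if `o = some N`. -/
def InIdx (o : Option ℕ) (j : ℕ) : Prop :=
  ∀ N : ℕ, o = some N → j ≤ N

/-- An induced complete sequence `{Q_i}_{i ∈ Δ}` of abstract key polynomials for `w`: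
a complete sequence of ABKPs, organized in blocks `Δ_j = {j} ∪ ϑ_j` (for `j` in
`I = {0,…,N}` or `I = ℕ`), satisfying the properties of Remark 1.3.  Here `blk i`
is the block of an index `i ∈ Δ`, `main j ∈ Δ` is the distinguished first element
of the block `Δ_j`, and `ϑ_j = {i ∈ Δ | blk i = j, i ≠ main j}`. -/
structure ICS {L : Type*} [Field L] [Algebra K L]
    (wbar : ValOn (Polynomial L) Γ) (w : ValOn (Polynomial K) Γ)
    (Δ : Type*) [LinearOrder Δ] where
  Q : Δ → Polynomial K
  abkp : ∀ i : Δ, IsABKP wbar (Q i)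
  wf : WellFoundedLT Δ
  delta_mono : ∀ i i' : Δ, i < i' → delta wbar (Q i) < delta wbar (Q i')
  wval_mono : ∀ i i' : Δ, i < i' → w.toFun (Q i) < w.toFun (Q i')
  complete : ∀ f : Polynomial K, f ≠ 0 →
    ∃ i : Δ, (Q i).degree ≤ f.degree ∧ truncVal w (Q i) f = w.toFun f
  Ifin : Option ℕ
  blk : Δ → ℕ
  main : ℕ → Δ
  blk_mono : ∀ i i' : Δ, i ≤ i' → blk i ≤ blk i'
  blk_mem : ∀ i : Δ, InIdx Ifin (blk i)
  blk_main : ∀ j : ℕ, InIdx Ifin j → blk (main j) = j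
  main_min : ∀ (j : ℕ) (i : Δ), blk i = j → main j ≤ i
  theta_no_last : ∀ i : Δ, i ≠ main (blk i) →
    ∃ i' : Δ, blk i' = blk i ∧ i' ≠ main (blk i) ∧ i < i'
  deg_blk_eq : ∀ i i' : Δ, blk i = blk i' → (Q i).degree = (Q i').degree
  deg_blk_lt : ∀ i i' : Δ, blk i < blk i' → (Q i).degree < (Q i').degree
  degQ0 : (Q (main 0)).degree = 1


/-! ### Auxiliary lemmas for Statement 17 -/

section Aux17

lemma ValOn.poly_map_one (u : ValOn (Polynomial K) Γ) : u.toFun 1 = 0 := by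
  have h := u.map_mul' 1 1
  rw [mul_one] at h
  have h1 : u.toFun 1 ≠ ⊤ := u.ne_top' 1 one_ne_zero
  lift u.toFun 1 to Γ using h1 with a ha
  rw [← WithTop.coe_add, WithTop.coe_inj] at h
  have ha0 : a = 0 := left_eq_add.mp h
  rw [ha0]; rfl

lemma ValOn.poly_map_neg (u : ValOn (Polynomial K) Γ) (f : Polynomial K) :
    u.toFun (-f) = u.toFun f := by
  have hm1 : u.toFun (-1 : Polynomial K) = 0 := by
    have h := u.map_mul' (-1) (-1)
    rw [neg_mul_neg, one_mul, u.poly_map_one] at h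
    have h1 : u.toFun (-1 : Polynomial K) ≠ ⊤ := u.ne_top' _ (by norm_num)
    lift u.toFun (-1 : Polynomial K) to Γ using h1 with a ha
    rw [← WithTop.coe_add, ← WithTop.coe_zero, WithTop.coe_inj] at h
    have ha0 : a = 0 := by
      rcases lt_trichotomy a 0 with hl | he | hg
      · have := add_lt_add hl hl; rw [← h, add_zero] at this; exact absurd this (lt_irrefl _)
      · exact he
      · have := add_lt_add hg hg; rw [← h, add_zero] at this; exact absurd this (lt_irrefl _)
    rw [ha0]; rfl
  have hrw : -f = (-1) * f := by ring
  rw [hrw, u.map_mul', hm1, zero_add]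

lemma ValOn.poly_sub_comm (u : ValOn (Polynomial K) Γ) (f g : Polynomial K) :
    u.toFun (f - g) = u.toFun (g - f) := by
  rw [← u.poly_map_neg (g - f), neg_sub]

/-- if `u f < u g` then `u (f + g) = u f`. -/
lemma ValOn.poly_add_eq_left (u : ValOn (Polynomial K) Γ) {f g : Polynomial K}
    (h : u.toFun f < u.toFun g) : u.toFun (f + g) = u.toFun f := by
  have h1 : u.toFun f ≤ u.toFun (f + g) := by
    have := u.add_min' f g; rwa [min_eq_left h.le] at this
  rcases eq_or_lt_of_le h1 with he | hlt
  · exact he.symm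
  · exfalso
    have h3 := u.add_min' (f + g) (-g)
    rw [add_neg_cancel_right, u.poly_map_neg] at h3
    have hm : u.toFun f < min (u.toFun (f + g)) (u.toFun g) := lt_min hlt h
    exact absurd h3 hm.not_ge

lemma const_val_eq (w' W : ValOn (Polynomial K) Γ) (hle : FnLe w'.toFun W.toFun) (c : K) :
    w'.toFun (C c) = W.toFun (C c) := by
  rcases eq_or_ne c 0 with rfl | hc
  · rw [C_0, w'.map_zero', W.map_zero']
  · have hC : (C c : Polynomial K) ≠ 0 := C_ne_zero.mpr hc
    have hC' : (C c⁻¹ : Polynomial K) ≠ 0 := C_ne_zero.mpr (inv_ne_zero hc)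
    have h1 : w'.toFun (C c) + w'.toFun (C c⁻¹) = 0 := by
      rw [← w'.map_mul', ← C_mul, mul_inv_cancel₀ hc, C_1, w'.poly_map_one]
    have h2 : W.toFun (C c) + W.toFun (C c⁻¹) = 0 := by
      rw [← W.map_mul', ← C_mul, mul_inv_cancel₀ hc, C_1, W.poly_map_one]
    refine le_antisymm (hle _) (not_lt.mp fun hlt => ?_)
    have h3 : w'.toFun (C c) + w'.toFun (C c⁻¹) < W.toFun (C c) + W.toFun (C c⁻¹) :=
      WithTop.add_lt_add_of_lt_of_le (w'.ne_top' _ hC') hlt (hle _)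
    rw [h1, h2] at h3
    exact lt_irrefl _ h3

lemma scale_lt_iff (w' W : ValOn (Polynomial K) Γ) (hle : FnLe w'.toFun W.toFun)
    {f : Polynomial K} (hf : f ≠ 0) :
    w'.toFun (f * C f.leadingCoeff⁻¹) < W.toFun (f * C f.leadingCoeff⁻¹) ↔
      w'.toFun f < W.toFun f := by
  have hc : f.leadingCoeff⁻¹ ≠ 0 := inv_ne_zero (leadingCoeff_ne_zero.mpr hf)
  have hCne : w'.toFun (C f.leadingCoeff⁻¹) ≠ ⊤ := w'.ne_top' _ (C_ne_zero.mpr hc)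
  rw [w'.map_mul', W.map_mul', ← const_val_eq w' W hle]
  exact WithTop.add_lt_add_iff_right hCne

lemma inPhi_deg_pos (w' W : ValOn (Polynomial K) Γ) {φ : Polynomial K}
    (hφ : InPhi w'.toFun W.toFun φ) : 0 < φ.degree := by
  rw [← natDegree_pos_iff_degree_pos]
  rcases Nat.eq_zero_or_pos φ.natDegree with h | h
  · exfalso
    have h1 : φ = 1 := (hφ.1.natDegree_eq_zero).mp h
    have h2 := hφ.2.1
    rw [h1, w'.poly_map_one, W.poly_map_one] at h2
    exact lt_irrefl _ h2
  · exact h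

lemma low_deg_eq (w' W : ValOn (Polynomial K) Γ) (hle : FnLe w'.toFun W.toFun)
    {φ : Polynomial K} (hφ : InPhi w'.toFun W.toFun φ) {f : Polynomial K}
    (hdeg : f.degree < φ.degree) : w'.toFun f = W.toFun f := by
  rcases eq_or_ne f 0 with rfl | hf
  · rw [w'.map_zero', W.map_zero']
  refine le_antisymm (hle f) (not_lt.mp fun hlt => ?_)
  have h2 : w'.toFun (f * C f.leadingCoeff⁻¹) < W.toFun (f * C f.leadingCoeff⁻¹) :=
    (scale_lt_iff w' W hle hf).mpr hlt
  have h3 := hφ.2.2 _ (monic_mul_leadingCoeff_inv hf) h2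
  rw [degree_mul_leadingCoeff_inv f hf] at h3
  exact absurd (lt_of_le_of_lt h3 hdeg) (lt_irrefl _)

lemma equiv_div_of_lt (w' W : ValOn (Polynomial K) Γ) (hle : FnLe w'.toFun W.toFun)
    {φ : Polynomial K} (hφ : InPhi w'.toFun W.toFun φ) {f : Polynomial K}
    (hf : w'.toFun f < W.toFun f) : EquivMod w'.toFun f (φ * (f /ₘ φ)) := by
  set q := f /ₘ φ with hq
  set r := f %ₘ φ with hr
  have hid : r + φ * q = f := modByMonic_add_div f φ
  have hrd : r.degree < φ.degree := degree_modByMonic_lt f hφ.1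
  have hre : w'.toFun r = W.toFun r := low_deg_eq w' W hle hφ hrd
  have hfsub : f - φ * q = r := by rw [← hid]; ring
  rcases lt_or_ge (w'.toFun (φ * q)) (w'.toFun r) with hcase | hcase
  · have hfe : w'.toFun f = w'.toFun (φ * q) := by
      have := w'.poly_add_eq_left hcase
      rwa [add_comm (φ * q) r, hid] at this
    exact ⟨by rw [hfsub, hfe]; exact hcase, hfe⟩
  · exfalso
    rcases eq_or_ne q 0 with hq0 | hqne
    · rw [hq0, mul_zero, add_zero] at hid
      rw [← hid, hre] at hf
      exact lt_irrefl _ hf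
    have hφne : φ ≠ 0 := hφ.1.ne_zero
    have hrne : r ≠ 0 := by
      intro h0
      rw [h0, w'.map_zero'] at hcase
      exact w'.ne_top' _ (mul_ne_zero hφne hqne) (top_le_iff.mp hcase)
    have h1 : W.toFun r < W.toFun f := by
      rw [← hre]
      refine lt_of_le_of_lt ?_ hf
      have hmin := w'.add_min' r (φ * q)
      rwa [hid, min_eq_left hcase] at hmin
    have h2 : W.toFun r < W.toFun (φ * q) := by
      have hs : w'.toFun φ + w'.toFun q < W.toFun φ + W.toFun q :=
        WithTop.add_lt_add_of_lt_of_le (w'.ne_top' q hqne) hφ.2.1 (hle q)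
      rw [← w'.map_mul', ← W.map_mul'] at hs
      rw [← hre]
      exact lt_of_le_of_lt hcase hs
    have h3 := W.add_min' f (-(φ * q))
    rw [W.poly_map_neg, ← sub_eq_add_neg, hfsub] at h3
    exact absurd h3 (not_le.mpr (lt_min h1 h2))

lemma lt_of_equiv_mul (w' W : ValOn (Polynomial K) Γ) (hle : FnLe w'.toFun W.toFun)
    {φ : Polynomial K} (hφ : InPhi w'.toFun W.toFun φ) {f h : Polynomial K}
    (hE : EquivMod w'.toFun f (φ * h)) : w'.toFun f < W.toFun f := by
  have hfne : f ≠ 0 := by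
    intro h0
    have h1 := hE.1
    rw [h0, w'.map_zero'] at h1
    exact absurd h1 not_top_lt
  have hftop : w'.toFun f ≠ ⊤ := w'.ne_top' f hfne
  have hmulne : φ * h ≠ 0 := by
    intro h0
    have h2 := hE.2
    rw [h0, w'.map_zero'] at h2
    exact hftop h2
  have hhne : h ≠ 0 := fun h0 => hmulne (by rw [h0, mul_zero])
  have h1 : w'.toFun f < W.toFun (f - φ * h) := lt_of_lt_of_le hE.1 (hle _)
  have h2 : w'.toFun f < W.toFun (φ * h) := by
    rw [hE.2, w'.map_mul', W.map_mul']
    exact WithTop.add_lt_add_of_lt_of_le (w'.ne_top' h hhne) hφ.2.1 (hle h)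
  have h3 := W.add_min' (f - φ * h) (φ * h)
  rw [sub_add_cancel] at h3
  exact lt_of_lt_of_le (lt_min h1 h2) h3

lemma isKeyPol_of_inPhi (w' W : ValOn (Polynomial K) Γ) (hle : FnLe w'.toFun W.toFun)
    {φ : Polynomial K} (hφ : InPhi w'.toFun W.toFun φ) : IsKeyPol w'.toFun φ := by
  refine ⟨hφ.1, ?_, ?_⟩
  · intro h q hdvd
    obtain ⟨t, ht⟩ := hdvd
    have hlt := lt_of_equiv_mul w' W hle hφ ht
    have hne : h * q ≠ 0 := by
      intro h0; rw [h0, w'.map_zero', W.map_zero'] at hlt; exact lt_irrefl _ hlt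
    have hh : h ≠ 0 := left_ne_zero_of_mul hne
    have hq : q ≠ 0 := right_ne_zero_of_mul hne
    have hor : w'.toFun h < W.toFun h ∨ w'.toFun q < W.toFun q := by
      by_contra hcon
      push_neg at hcon
      have e1 : w'.toFun h = W.toFun h := le_antisymm (hle h) hcon.1
      have e2 : w'.toFun q = W.toFun q := le_antisymm (hle q) hcon.2
      rw [w'.map_mul', W.map_mul', e1, e2] at hlt
      exact lt_irrefl _ hlt
    rcases hor with hc | hc
    · exact Or.inl ⟨_, equiv_div_of_lt w' W hle hφ hc⟩
    · exact Or.inr ⟨_, equiv_div_of_lt w' W hle hφ hc⟩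
  · intro h hne hdvd
    obtain ⟨t, ht⟩ := hdvd
    have hlt := lt_of_equiv_mul w' W hle hφ ht
    by_contra hcon
    push_neg at hcon
    rw [low_deg_eq w' W hle hφ hcon] at hlt
    exact lt_irrefl _ hlt

lemma equivMod_of_inPhi_inPhi (w' W : ValOn (Polynomial K) Γ) (hle : FnLe w'.toFun W.toFun)
    {φ g : Polynomial K} (hφ : InPhi w'.toFun W.toFun φ)
    (hg : InPhi w'.toFun W.toFun g) : EquivMod w'.toFun g φ := by
  have hdeg : g.degree = φ.degree := le_antisymm (hg.2.2 φ hφ.1 hφ.2.1) (hφ.2.2 g hg.1 hg.2.1)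
  rcases eq_or_ne g φ with rfl | hne
  · refine ⟨?_, rfl⟩
    rw [sub_self, w'.map_zero']
    exact lt_top_iff_ne_top.mpr (w'.ne_top' g hg.1.ne_zero)
  · have hsub : (g - φ).degree < φ.degree := by
      rw [← hdeg]
      exact degree_sub_lt hdeg hg.1.ne_zero (by rw [hg.1.leadingCoeff, hφ.1.leadingCoeff])
    have heq : w'.toFun (g - φ) = W.toFun (g - φ) := low_deg_eq w' W hle hφ hsub
    have hWge : min (W.toFun g) (W.toFun φ) ≤ W.toFun (g - φ) := by
      have := W.add_min' g (-φ)
      rwa [W.poly_map_neg, ← sub_eq_add_neg] at this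
    have hgt : min (w'.toFun g) (w'.toFun φ) < w'.toFun (g - φ) := by
      rw [heq]
      refine lt_of_lt_of_le ?_ hWge
      exact lt_min (lt_of_le_of_lt (min_le_left _ _) hg.2.1)
        (lt_of_le_of_lt (min_le_right _ _) hφ.2.1)
    have heqv : w'.toFun g = w'.toFun φ := by
      rcases lt_trichotomy (w'.toFun g) (w'.toFun φ) with hl | he | hr
      · exfalso
        have h4 := w'.add_min' (g - φ) φ
        rw [sub_add_cancel] at h4
        rw [min_eq_left hl.le] at hgt
        exact absurd h4 (lt_min hgt hl).not_ge
      · exact he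
      · exfalso
        have h4 := w'.add_min' (φ - g) g
        rw [sub_add_cancel] at h4
        rw [min_eq_right hr.le] at hgt
        have hgt' : w'.toFun φ < w'.toFun (φ - g) := by rwa [w'.poly_sub_comm φ g]
        exact absurd h4 (lt_min hgt' hr).not_ge
    refine ⟨?_, heqv⟩
    rw [min_eq_left heqv.le] at hgt
    exact hgt

lemma inPhi_of_key_equiv (w' W : ValOn (Polynomial K) Γ) (hle : FnLe w'.toFun W.toFun)
    {φ g : Polynomial K} (hφ : InPhi w'.toFun W.toFun φ)
    (hg : IsKeyPol w'.toFun g) (hE : EquivMod w'.toFun g φ) :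
    InPhi w'.toFun W.toFun g := by
  refine ⟨hg.1, ?_, ?_⟩
  · have h1 : w'.toFun g < W.toFun (g - φ) := lt_of_lt_of_le hE.1 (hle _)
    have h2 : w'.toFun g < W.toFun φ := by rw [hE.2]; exact hφ.2.1
    have h3 := W.add_min' (g - φ) φ
    rw [sub_add_cancel] at h3
    exact lt_of_lt_of_le (lt_min h1 h2) h3
  · intro h hm hlt
    refine le_trans ?_ (hφ.2.2 h hm hlt)
    have hdvd : DvdMod w'.toFun g φ := by
      refine ⟨1, ?_, ?_⟩
      · rw [mul_one, w'.poly_sub_comm φ g, ← hE.2]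
        exact hE.1
      · rw [mul_one]
        exact hE.2.symm
    exact hg.2.2 φ hφ.1.ne_zero hdvd

lemma exists_inPhi (w' W : ValOn (Polynomial K) Γ) (hle : FnLe w'.toFun W.toFun)
    (hlt : ∃ f : Polynomial K, w'.toFun f < W.toFun f) :
    ∃ φ : Polynomial K, InPhi w'.toFun W.toFun φ := by
  classical
  obtain ⟨f, hf⟩ := hlt
  have hfne : f ≠ 0 := by
    intro h0; rw [h0, w'.map_zero', W.map_zero'] at hf; exact lt_irrefl _ hf
  have hg : ∃ n : ℕ, ∃ p : Polynomial K, p.Monic ∧ w'.toFun p < W.toFun p ∧ p.natDegree = n :=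
    ⟨_, f * C f.leadingCoeff⁻¹, monic_mul_leadingCoeff_inv hfne,
      (scale_lt_iff w' W hle hfne).mpr hf, rfl⟩
  obtain ⟨p, hp1, hp2, hp3⟩ := Nat.find_spec hg
  refine ⟨p, hp1, hp2, ?_⟩
  intro h hm hhlt
  have hfind : Nat.find hg ≤ h.natDegree := Nat.find_min' hg ⟨h, hm, hhlt, rfl⟩
  rw [degree_eq_natDegree hp1.ne_zero, degree_eq_natDegree hm.ne_zero]
  exact_mod_cast hp3 ▸ hfind

lemma inPhi_big_of_inPhi_small (w' ν W : ValOn (Polynomial K) Γ)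
    (hleν : FnLe w'.toFun ν.toFun) (hνW : FnLe ν.toFun W.toFun)
    {φ φ0 : Polynomial K} (hφ : InPhi w'.toFun W.toFun φ)
    (hφ0 : InPhi w'.toFun ν.toFun φ0) : InPhi w'.toFun W.toFun φ0 := by
  have hleW : FnLe w'.toFun W.toFun := fun f => le_trans (hleν f) (hνW f)
  refine ⟨hφ0.1, lt_of_lt_of_le hφ0.2.1 (hνW φ0), ?_⟩
  intro h hm hlt
  refine le_trans ?_ (hφ.2.2 h hm hlt)
  by_contra hcon
  push_neg at hcon
  have hφ0lt : w'.toFun φ0 < W.toFun φ0 := lt_of_lt_of_le hφ0.2.1 (hνW φ0)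
  have hE := equiv_div_of_lt w' W hleW hφ hφ0lt
  set h0 := φ0 /ₘ φ with hh0
  have hdegh0 : h0.degree < φ0.degree :=
    degree_divByMonic_lt φ0 φ hφ0.1.ne_zero (inPhi_deg_pos w' W hφ)
  have hν1 : ν.toFun (φ * h0) = w'.toFun (φ * h0) := by
    rw [ν.map_mul', w'.map_mul', ← low_deg_eq w' ν hleν hφ0 hcon,
      ← low_deg_eq w' ν hleν hφ0 hdegh0]
  have hν2 : ν.toFun (φ * h0) < ν.toFun (φ0 - φ * h0) := by
    rw [hν1, ← hE.2]
    exact lt_of_lt_of_le hE.1 (hleν _)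
  have hν3 : ν.toFun φ0 = ν.toFun (φ * h0) := by
    have := ν.poly_add_eq_left hν2
    have harr : φ * h0 + (φ0 - φ * h0) = φ0 := by ring
    rwa [harr] at this
  have hc := hφ0.2.1
  rw [hν3, hν1, ← hE.2] at hc
  exact lt_irrefl _ hc

end Aux17

/-- for valuations `w' < w` on `K(X)`: (i) `Φ(w', w) = [φ]_{w'}` for
every `φ ∈ Φ(w', w)`; (ii) for any chain `w' < ν ≤ w`, `Φ(w', w) = Φ(w', ν)` and
`w'(f) = w(f) ↔ w'(f) = ν(f)` for all `f ∈ K[X]`. -/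
theorem inPhi_eq_equivClass_and_chain
    {K : Type*} [Field K] {Γ : Type*} [AddCommGroup Γ] [LinearOrder Γ] [IsOrderedAddMonoid Γ]
    (w' w : ValOn (Polynomial K) Γ) (hlt : FnLt w'.toFun w.toFun) :
    (∀ φ : Polynomial K, InPhi w'.toFun w.toFun φ →
      ∀ g : Polynomial K, InPhi w'.toFun w.toFun g ↔
        (IsKeyPol w'.toFun g ∧ EquivMod w'.toFun g φ)) ∧
    (∀ ν : ValOn (Polynomial K) Γ, FnLt w'.toFun ν.toFun → FnLe ν.toFun w.toFun →
      (∀ g : Polynomial K, InPhi w'.toFun w.toFun g ↔ InPhi w'.toFun ν.toFun g) ∧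
      (∀ f : Polynomial K, w'.toFun f = w.toFun f ↔ w'.toFun f = ν.toFun f)) := by
  have hle : FnLe w'.toFun w.toFun := hlt.1
  constructor
  · intro φ hφ g
    constructor
    · intro hg
      exact ⟨isKeyPol_of_inPhi w' w hle hg, equivMod_of_inPhi_inPhi w' w hle hφ hg⟩
    · rintro ⟨hkey, hE⟩
      exact inPhi_of_key_equiv w' w hle hφ hkey hE
  · intro ν hltν hνw
    obtain ⟨φ0, hφ0ν⟩ := exists_inPhi w' ν hltν.1 hltν.2
    obtain ⟨φ, hφ⟩ := exists_inPhi w' w hle hlt.2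
    have hφ0w : InPhi w'.toFun w.toFun φ0 := inPhi_big_of_inPhi_small w' ν w hltν.1 hνw hφ hφ0ν
    have hiff : ∀ f : Polynomial K, w'.toFun f < w.toFun f ↔ w'.toFun f < ν.toFun f := by
      intro f
      constructor
      · intro h
        exact lt_of_equiv_mul w' ν hltν.1 hφ0ν (equiv_div_of_lt w' w hle hφ0w h)
      · intro h
        exact lt_of_lt_of_le h (hνw f)
    constructor
    · intro g
      constructor
      · rintro ⟨h1, h2, h3⟩
        exact ⟨h1, (hiff g).mp h2, fun h hm hl => h3 h hm ((hiff h).mpr hl)⟩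
      · rintro ⟨h1, h2, h3⟩
        exact ⟨h1, (hiff g).mpr h2, fun h hm hl => h3 h hm ((hiff h).mp hl)⟩
    · intro f
      constructor
      · intro h
        exact le_antisymm (hltν.1 f) (by rw [h]; exact hνw f)
      · intro h
        refine le_antisymm (hle f) (not_lt.mp fun hl => ?_)
        have hcc := (hiff f).mp hl
        rw [h] at hcc
        exact lt_irrefl _ hcc


end MLV
end

section
/- Let w be a valuation of K(X) extending v, and let w̄₁ and w̄₂ be two common extensions of w and v̄ to K̄(X). Then for every nonzero polynomial f ∈ K[X], max{ w̄₁(X−α) : α ∈ K̄, f(α)=0 } = max{ w̄₂(X−α) : α ∈ K̄, f(α)=0 }; that is, δ(f) does not depend on the choice of the common extension. -/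
namespace MLV

open Polynomial

section Aux

variable {Γ : Type*} [AddCommGroup Γ] [LinearOrder Γ] [IsOrderedAddMonoid Γ]

namespace ValOn

variable {R : Type*} [CommRing R] (u : ValOn R Γ)

theorem eq_top {x : R} (hx : x = 0) : u.toFun x = ⊤ := hx ▸ u.map_zero'

theorem ne_zero {x : R} (hx : u.toFun x ≠ ⊤) : x ≠ 0 := fun h => hx (u.eq_top h)

variable [Nontrivial R]

theorem vone : u.toFun 1 = 0 := by
  have h := u.map_mul' 1 1
  rw [mul_one] at h
  have h1 : u.toFun 1 ≠ ⊤ := u.ne_top' 1 one_ne_zero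
  lift u.toFun 1 to Γ using h1 with a ha
  have : ((a : WithTop Γ)) = ((a + a : Γ) : WithTop Γ) := by exact_mod_cast h
  have h2 : a = a + a := by exact_mod_cast this
  have h3 : a = 0 := by
    have := add_left_cancel (a := a) (b := (0:Γ)) (c := a) (by rw [add_zero]; exact h2)
    exact this.symm
  exact_mod_cast congrArg (fun t : Γ => (t : WithTop Γ)) h3

theorem vneg (x : R) : u.toFun (-x) = u.toFun x := by
  have hm : u.toFun (-1 : R) = 0 := by
    have h := u.map_mul' (-1) (-1)
    rw [neg_mul_neg, one_mul, u.vone] at h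
    have h1 : u.toFun (-1 : R) ≠ ⊤ := u.ne_top' _ (neg_ne_zero.mpr one_ne_zero)
    lift u.toFun (-1 : R) to Γ using h1 with a ha
    have h2 : a + a = 0 := by exact_mod_cast h.symm
    have : a = 0 := by
      rcases lt_trichotomy a 0 with hl | he | hg
      · refine absurd h2 (ne_of_lt ?_)
        calc a + a < 0 + 0 := add_lt_add hl hl
          _ = 0 := add_zero 0
      · exact he
      · refine absurd h2 (ne_of_gt ?_)
        calc (0:Γ) = 0 + 0 := (add_zero 0).symm
          _ < a + a := add_lt_add hg hg
    exact_mod_cast congrArg (fun t : Γ => (t : WithTop Γ)) this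
  calc u.toFun (-x) = u.toFun ((-1) * x) := by rw [neg_one_mul]
    _ = u.toFun (-1 : R) + u.toFun x := u.map_mul' _ _
    _ = u.toFun x := by rw [hm, zero_add]

theorem vpow (x : R) (n : ℕ) : u.toFun (x ^ n) = n • u.toFun x := by
  induction n with
  | zero => simp [u.vone]
  | succ n ih => rw [pow_succ, u.map_mul', ih, succ_nsmul]

theorem vnat (n : ℕ) : 0 ≤ u.toFun (n : R) := by
  induction n with
  | zero => simp [u.map_zero']
  | succ n ih =>
      push_cast
      refine le_trans ?_ (u.add_min' _ _)
      exact le_min ih (le_of_eq u.vone.symm)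

theorem vnsmul_ge (n : ℕ) (x : R) : u.toFun x ≤ u.toFun (n • x) := by
  rw [nsmul_eq_mul, u.map_mul']
  exact le_add_of_nonneg_left (u.vnat n)

theorem vadd_left {x y : R} (h : u.toFun x < u.toFun y) : u.toFun (x + y) = u.toFun x := by
  refine le_antisymm ?_ ?_
  · by_contra hc
    push_neg at hc
    have h1 : u.toFun x < min (u.toFun (x + y)) (u.toFun (-y)) := by
      rw [u.vneg]; exact lt_min hc h
    have h2 : min (u.toFun (x + y)) (u.toFun (-y)) ≤ u.toFun x := by
      have := u.add_min' (x + y) (-y)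
      rwa [add_neg_cancel_right] at this
    exact absurd (lt_of_lt_of_le h1 h2) (lt_irrefl _)
  · exact le_trans (le_min le_rfl h.le) (u.add_min' x y)

theorem vprod (s : Multiset R) : u.toFun s.prod = (s.map u.toFun).sum := by
  induction s using Multiset.induction_on with
  | empty => simp [u.vone]
  | cons a s ih => simp [u.map_mul', ih]

theorem vsum_le_add {ι : Type*} (s : Finset ι) (g : ι → R) (γ e : WithTop Γ)
    (h : ∀ i ∈ s, γ ≤ u.toFun (g i) + e) : γ ≤ u.toFun (∑ i ∈ s, g i) + e := by
  classical
  induction s using Finset.induction_on with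
  | empty => simp [u.map_zero']
  | insert _ _ hns ih =>
      rename_i a s
      rw [Finset.sum_insert hns]
      have hmin : min (u.toFun (g a)) (u.toFun (∑ i ∈ s, g i)) ≤ u.toFun (g a + ∑ i ∈ s, g i) :=
        u.add_min' _ _
      have h1 : γ ≤ u.toFun (g a) + e := h a (Finset.mem_insert_self a s)
      have h2 : γ ≤ u.toFun (∑ i ∈ s, g i) + e := ih fun i hi => h i (Finset.mem_insert_of_mem hi)
      calc γ ≤ min (u.toFun (g a)) (u.toFun (∑ i ∈ s, g i)) + e := by
            rcases min_cases (u.toFun (g a)) (u.toFun (∑ i ∈ s, g i)) with ⟨hm, _⟩ | ⟨hm, _⟩ <;>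
              rw [hm] <;> assumption
        _ ≤ _ := add_le_add_left hmin e

theorem vsum_lt_add {ι : Type*} (s : Finset ι) (g : ι → R) (γ e : WithTop Γ) (hγ : γ ≠ ⊤)
    (h : ∀ i ∈ s, γ < u.toFun (g i) + e) : γ < u.toFun (∑ i ∈ s, g i) + e := by
  classical
  induction s using Finset.induction_on with
  | empty =>
      simp only [Finset.sum_empty, u.map_zero', top_add]
      exact lt_top_iff_ne_top.mpr hγ
  | insert _ _ hns ih =>
      rename_i a s
      rw [Finset.sum_insert hns]
      have hmin : min (u.toFun (g a)) (u.toFun (∑ i ∈ s, g i)) ≤ u.toFun (g a + ∑ i ∈ s, g i) :=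
        u.add_min' _ _
      have h1 : γ < u.toFun (g a) + e := h a (Finset.mem_insert_self a s)
      have h2 : γ < u.toFun (∑ i ∈ s, g i) + e := ih fun i hi => h i (Finset.mem_insert_of_mem hi)
      calc γ < min (u.toFun (g a)) (u.toFun (∑ i ∈ s, g i)) + e := by
            rcases min_cases (u.toFun (g a)) (u.toFun (∑ i ∈ s, g i)) with ⟨hm, _⟩ | ⟨hm, _⟩ <;>
              rw [hm] <;> assumption
        _ ≤ _ := add_le_add_left hmin e

theorem vsum_eq {ι : Type*} (s : Finset ι) (g : ι → R) (a₀ : ι) (ha₀ : a₀ ∈ s)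
    (h : ∀ a ∈ s, a ≠ a₀ → u.toFun (g a₀) < u.toFun (g a)) (h0 : u.toFun (g a₀) ≠ ⊤) :
    u.toFun (∑ i ∈ s, g i) = u.toFun (g a₀) := by
  classical
  rw [← Finset.add_sum_erase s g ha₀]
  refine u.vadd_left ?_
  have := u.vsum_lt_add (s.erase a₀) g (u.toFun (g a₀)) 0 h0 (fun i hi => by
    rw [add_zero]
    exact h i (Finset.mem_of_mem_erase hi) (Finset.ne_of_mem_erase hi))
  rwa [add_zero] at this

end ValOn

theorem msum_ne_top {s : Multiset (WithTop Γ)} (h : ∀ x ∈ s, x ≠ ⊤) : s.sum ≠ ⊤ := by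
  induction s using Multiset.induction_on with
  | empty => simp
  | cons a s ih =>
      rw [Multiset.sum_cons]
      exact WithTop.add_ne_top.mpr ⟨h a (Multiset.mem_cons_self a s),
        ih fun x hx => h x (Multiset.mem_cons_of_mem hx)⟩

theorem nsmul_ne_top {y : WithTop Γ} (hy : y ≠ ⊤) (n : ℕ) : n • y ≠ ⊤ := by
  induction n with
  | zero => simp
  | succ n ih => rw [succ_nsmul]; exact WithTop.add_ne_top.mpr ⟨ih, hy⟩

theorem nsmul_lt_nsmul {x y : WithTop Γ} (hy : y ≠ ⊤) (h : x < y) {n : ℕ} (hn : 1 ≤ n) :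
    n • x < n • y := by
  induction n with
  | zero => omega
  | succ n ih =>
      rcases Nat.eq_or_lt_of_le hn with h1 | h1
      · simp only [← h1, one_smul] at *
        exact h
      · have hih := ih (by omega)
        rw [succ_nsmul, succ_nsmul]
        calc n • x + x < n • x + y := WithTop.add_lt_add_left (nsmul_ne_top (ne_top_of_lt h) n) h
          _ < n • y + y := WithTop.add_lt_add_right hy hih

section PolyLemmas

variable {Γ : Type*} [AddCommGroup Γ] [LinearOrder Γ] [IsOrderedAddMonoid Γ]
variable {L : Type*} [Field L]

open Polynomial

/-- coefficient of a product of linear factors: basic recursion helper -/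
theorem lin_mul_coeff (x : L) (P : Polynomial L) (j : ℕ) :
    ((X - C x) * P).coeff (j + 1) = P.coeff j - x * P.coeff (j + 1) := by
  rw [sub_mul, coeff_sub, coeff_X_mul, coeff_C_mul]

theorem lin_mul_coeff_zero (x : L) (P : Polynomial L) :
    ((X - C x) * P).coeff 0 = -(x * P.coeff 0) := by
  rw [sub_mul, coeff_sub, coeff_X_mul_zero, coeff_C_mul, zero_sub]

/-- Valuation bounds for the coefficients of `∏ (X - x)` over a multiset with all
`u x ≥ δ`. -/
theorem LB (u : ValOn L Γ) (δ : WithTop Γ) (M : Multiset L) (hM : ∀ x ∈ M, δ ≤ u.toFun x) :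
    (∀ i : ℕ, (M.card - i) • δ ≤ u.toFun (((M.map fun x => X - C x).prod).coeff i)) ∧
    (((M.map fun x => X - C x).prod).coeff M.card = 1) ∧
    (∀ i : ℕ, M.card < i → ((M.map fun x => X - C x).prod).coeff i = 0) := by
  induction M using Multiset.induction_on with
  | empty =>
      refine ⟨?_, by simp, ?_⟩
      · intro i
        rcases Nat.eq_zero_or_pos i with h | h
        · simp [h, u.vone]
        · rw [Multiset.card_zero, Nat.zero_sub, zero_smul]
          simp only [Multiset.map_zero, Multiset.prod_zero]
          rw [coeff_one, if_neg (by omega)]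
          simp [u.map_zero']
      · intro i hi
        simp only [Multiset.map_zero, Multiset.prod_zero]
        rw [coeff_one, if_neg (by omega)]
  | cons x M ih =>
      have hx : δ ≤ u.toFun x := hM x (Multiset.mem_cons_self x M)
      obtain ⟨ih1, ih2, ih3⟩ := ih fun y hy => hM y (Multiset.mem_cons_of_mem hy)
      set P := ((M.map fun x => X - C x).prod) with hP
      have hprod : (((x ::ₘ M).map fun x => X - C x).prod) = (X - C x) * P := by
        rw [Multiset.map_cons, Multiset.prod_cons]
      have hcard : (x ::ₘ M).card = M.card + 1 := Multiset.card_cons x M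
      refine ⟨?_, ?_, ?_⟩
      · intro i
        rw [hprod, hcard]
        cases i with
        | zero =>
            rw [lin_mul_coeff_zero, u.vneg, u.map_mul']
            have : (M.card + 1 - 0) • δ = δ + M.card • δ := by
              rw [Nat.sub_zero, add_nsmul, one_smul, add_comm]
            rw [this]
            exact add_le_add hx (by simpa using ih1 0)
        | succ j =>
            rw [lin_mul_coeff]
            refine le_trans (le_min ?_ ?_) (by
              have := u.add_min' (P.coeff j) (-(x * P.coeff (j + 1)))
              rwa [u.vneg, ← sub_eq_add_neg] at this)
            · have : M.card + 1 - (j + 1) = M.card - j := by omega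
              rw [this]
              exact ih1 j
            · rw [u.map_mul']
              rcases Nat.lt_or_ge M.card (j + 1) with h | h
              · rw [ih3 _ h, u.map_zero']
                simp
              · have h1 : M.card + 1 - (j + 1) = (M.card - (j + 1)) + 1 := by omega
                rw [h1, add_nsmul, one_smul, add_comm]
                exact add_le_add hx (ih1 (j + 1))
      · rw [hprod, hcard, lin_mul_coeff, ih2, ih3 _ (by omega), mul_zero, sub_zero]
      · intro i hi
        rw [hcard] at hi
        rw [hprod]
        obtain ⟨j, rfl⟩ : ∃ j, i = j + 1 := ⟨i - 1, by omega⟩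
        rw [lin_mul_coeff, ih3 _ (by omega), ih3 _ (by omega), mul_zero, sub_zero]

/-- Valuation of the coefficients of `∏ (X - x)` over a multiset with all `u x < δ`:
the constant coefficient has valuation the sum, all others are strictly bigger in
`δ`-weighted terms. -/
theorem LS (u : ValOn L Γ) (δ : WithTop Γ) (hδ : δ ≠ ⊤) (M : Multiset L)
    (hM : ∀ x ∈ M, u.toFun x < δ) :
    u.toFun (((M.map fun x => X - C x).prod).coeff 0) = (M.map u.toFun).sum ∧
    (∀ j : ℕ, 1 ≤ j →
      (M.map u.toFun).sum < u.toFun (((M.map fun x => X - C x).prod).coeff j) + j • δ) := by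
  induction M using Multiset.induction_on with
  | empty =>
      refine ⟨by simp [u.vone], ?_⟩
      intro j hj
      simp only [Multiset.map_zero, Multiset.prod_zero, Multiset.sum_zero]
      rw [coeff_one, if_neg (by omega), u.map_zero', top_add]
      exact lt_top_iff_ne_top.mpr (by simp)
  | cons x M ih =>
      have hx : u.toFun x < δ := hM x (Multiset.mem_cons_self x M)
      have hxt : u.toFun x ≠ ⊤ := ne_top_of_lt hx
      obtain ⟨ih1, ih2⟩ := ih fun y hy => hM y (Multiset.mem_cons_of_mem hy)
      have hSt : (M.map u.toFun).sum ≠ ⊤ := msum_ne_top fun y hy => by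
        obtain ⟨z, hz, rfl⟩ := Multiset.mem_map.mp hy
        exact ne_top_of_lt (hM z (Multiset.mem_cons_of_mem hz))
      set P := ((M.map fun x => X - C x).prod) with hP
      have hprod : (((x ::ₘ M).map fun x => X - C x).prod) = (X - C x) * P := by
        rw [Multiset.map_cons, Multiset.prod_cons]
      have hsum : ((x ::ₘ M).map u.toFun).sum = u.toFun x + (M.map u.toFun).sum := by
        rw [Multiset.map_cons, Multiset.sum_cons]
      refine ⟨?_, ?_⟩
      · rw [hprod, hsum, lin_mul_coeff_zero, u.vneg, u.map_mul', ih1]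
      · intro j hj
        rw [hprod, hsum]
        obtain ⟨j', rfl⟩ : ∃ j', j = j' + 1 := ⟨j - 1, by omega⟩
        rw [lin_mul_coeff]
        have hmin : min (u.toFun (P.coeff j')) (u.toFun (x * P.coeff (j' + 1)))
            ≤ u.toFun (P.coeff j' - x * P.coeff (j' + 1)) := by
          have := u.add_min' (P.coeff j') (-(x * P.coeff (j' + 1)))
          rwa [u.vneg, ← sub_eq_add_neg] at this
        have harg1 : u.toFun x + (M.map u.toFun).sum < u.toFun (P.coeff j') + (j' + 1) • δ := by
          rcases Nat.eq_zero_or_pos j' with h0 | h0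
          · subst h0
            rw [ih1]
            simp only [zero_add, one_smul]
            calc u.toFun x + (M.map u.toFun).sum
                < δ + (M.map u.toFun).sum := WithTop.add_lt_add_right hSt hx
              _ = (M.map u.toFun).sum + δ := add_comm _ _
          · have := ih2 j' h0
            calc u.toFun x + (M.map u.toFun).sum
                < u.toFun x + (u.toFun (P.coeff j') + j' • δ) :=
                  WithTop.add_lt_add_left hxt this
              _ ≤ δ + (u.toFun (P.coeff j') + j' • δ) := add_le_add_left hx.le _
              _ = u.toFun (P.coeff j') + (j' + 1) • δ := by
                  rw [add_nsmul, one_smul]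
                  abel
        have harg2 : u.toFun x + (M.map u.toFun).sum
            < u.toFun (x * P.coeff (j' + 1)) + (j' + 1) • δ := by
          rw [u.map_mul']
          calc u.toFun x + (M.map u.toFun).sum
              < u.toFun x + (u.toFun (P.coeff (j' + 1)) + (j' + 1) • δ) :=
                WithTop.add_lt_add_left hxt (ih2 (j' + 1) (by omega))
            _ = u.toFun x + u.toFun (P.coeff (j' + 1)) + (j' + 1) • δ := by rw [add_assoc]
        calc u.toFun x + (M.map u.toFun).sum
            < min (u.toFun (P.coeff j')) (u.toFun (x * P.coeff (j' + 1))) + (j' + 1) • δ := by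
              rcases min_cases (u.toFun (P.coeff j')) (u.toFun (x * P.coeff (j' + 1))) with
                ⟨hm, _⟩ | ⟨hm, _⟩ <;> rw [hm] <;> assumption
          _ ≤ _ := add_le_add_left hmin _

end PolyLemmas

section Core

variable {Γ : Type*} [AddCommGroup Γ] [LinearOrder Γ] [IsOrderedAddMonoid Γ]
variable {L : Type*} [Field L] [IsAlgClosed L]

open Polynomial

/-- The restriction of a valuation on `L[X]` to the constants. -/
noncomputable def Vc (W : ValOn (Polynomial L) Γ) : ValOn L Γ where
  toFun x := W.toFun (C x)
  map_zero' := by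
    show W.toFun (C 0) = ⊤
    rw [map_zero]; exact W.map_zero'
  ne_top' x hx := W.ne_top' _ (by simpa using hx)
  map_mul' x y := by
    show W.toFun (C (x * y)) = W.toFun (C x) + W.toFun (C y)
    rw [map_mul]; exact W.map_mul' _ _
  add_min' x y := by
    show min (W.toFun (C x)) (W.toFun (C y)) ≤ W.toFun (C (x + y))
    rw [map_add]; exact W.add_min' _ _

/-- `W(X - β)`, i.e. the distance from the "generic point" to `β`. -/
noncomputable def dd (W : ValOn (Polynomial L) Γ) (β : L) : WithTop Γ := W.toFun (X - C β)

theorem dd_ne_top (W : ValOn (Polynomial L) Γ) (β : L) : dd W β ≠ ⊤ :=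
  W.ne_top' _ (X_sub_C_ne_zero β)

theorem dd_ge_min (W : ValOn (Polynomial L) Γ) (β τ : L) :
    min (dd W β) ((Vc W).toFun (β - τ)) ≤ dd W τ := by
  have h : X - C τ = (X - C β) + C (β - τ) := by rw [map_sub]; ring
  show _ ≤ W.toFun (X - C τ)
  rw [h]
  exact W.add_min' _ _

theorem v_sub_ge_min (W : ValOn (Polynomial L) Γ) (β τ : L) :
    min (dd W β) (dd W τ) ≤ (Vc W).toFun (β - τ) := by
  have h : C (β - τ) = (X - C τ) + -(X - C β) := by rw [map_sub]; ring
  show _ ≤ W.toFun (C (β - τ))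
  rw [h]
  refine le_trans (le_min ?_ ?_) (W.add_min' _ _)
  · exact min_le_right _ _
  · rw [W.vneg]; exact min_le_left _ _

theorem dd_eq_of_small (W : ValOn (Polynomial L) Γ) {β τ : L}
    (h : (Vc W).toFun (β - τ) < dd W β) : dd W τ = (Vc W).toFun (β - τ) := by
  refine le_antisymm ?_ ?_
  · by_contra hc
    push_neg at hc
    have h1 : (Vc W).toFun (β - τ) < min (dd W β) (dd W τ) := lt_min h hc
    exact absurd (lt_of_lt_of_le h1 (v_sub_ge_min W β τ)) (lt_irrefl _)
  · have h2 := dd_ge_min W β τ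
    rwa [min_eq_right h.le] at h2

theorem multiset_prod_comp' (s : Multiset (Polynomial L)) (q : Polynomial L) :
    s.prod.comp q = (s.map (·.comp q)).prod := by
  induction s using Multiset.induction_on with
  | empty => simp
  | cons a s ih => simp [mul_comp, ih]

theorem exists_max {α : Type*} (s : Multiset α) (g : α → WithTop Γ) (hs : s ≠ 0) :
    ∃ a ∈ s, ∀ b ∈ s, g b ≤ g a := by
  induction s using Multiset.induction_on with
  | empty => exact absurd rfl hs
  | cons a s ih =>
      rcases eq_or_ne s 0 with rfl | h
      · refine ⟨a, Multiset.mem_cons_self a 0, fun b hb => ?_⟩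
        rw [Multiset.mem_cons] at hb
        rcases hb with rfl | hb
        · exact le_rfl
        · simp at hb
      · obtain ⟨m, hm, hmax⟩ := ih h
        rcases le_total (g m) (g a) with hle | hle
        · refine ⟨a, Multiset.mem_cons_self a s, fun b hb => ?_⟩
          rw [Multiset.mem_cons] at hb
          rcases hb with rfl | hb
          · exact le_rfl
          · exact le_trans (hmax b hb) hle
        · refine ⟨m, Multiset.mem_cons_of_mem hm, fun b hb => ?_⟩
          rw [Multiset.mem_cons] at hb
          rcases hb with rfl | hb
          · exact hle
          · exact hmax b hb

theorem core (W : ValOn (Polynomial L) Γ) (F : Polynomial L) (α : L) (hα : α ∈ F.roots)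
    (hmax : ∀ β ∈ F.roots, dd W β ≤ dd W α) :
    (∃ b : ℕ, 1 ≤ b ∧ hasseDeriv b F ≠ 0 ∧
        W.toFun (hasseDeriv b F) + b • dd W α = W.toFun F) ∧
    (∀ m : ℕ, W.toFun F ≤ W.toFun (hasseDeriv m F) + m • dd W α) := by
  classical
  set δ : WithTop Γ := dd W α with hδdef
  have hδtop : δ ≠ ⊤ := dd_ne_top W α
  have hF0 : F ≠ 0 := fun h => by simp [h] at hα
  set c : L := F.leadingCoeff with hc
  have hc0 : c ≠ 0 := leadingCoeff_ne_zero.mpr hF0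
  have hVc : (Vc W).toFun c ≠ ⊤ := (Vc W).ne_top' c hc0
  set R : Multiset L := F.roots with hR
  have hsplit : F = C c * (R.map fun β => X - C β).prod :=
    Splits.eq_prod_roots (IsAlgClosed.splits F)
  set M : Multiset L := R.map (fun β => β - α) with hM
  have hmemM : ∀ x ∈ M, x + α ∈ R := by
    intro x hx
    obtain ⟨β, hβ, rfl⟩ := Multiset.mem_map.mp hx
    rwa [sub_add_cancel]
  have hVx_dd : ∀ x : L, (Vc W).toFun x = (Vc W).toFun (α - (x + α)) := by
    intro x
    have h : α - (x + α) = -x := by ring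
    rw [h, (Vc W).vneg]
  have hdd_big : ∀ x ∈ M, δ ≤ (Vc W).toFun x → dd W (x + α) = δ := by
    intro x hx h
    refine le_antisymm (hmax _ (hmemM x hx)) ?_
    have h2 := dd_ge_min W α (x + α)
    rw [← hVx_dd x, ← hδdef, min_eq_left h] at h2
    exact h2
  have hdd_small : ∀ x : L, (Vc W).toFun x < δ → dd W (x + α) = (Vc W).toFun x := by
    intro x h
    have h2 := dd_eq_of_small W (β := α) (τ := x + α) (by rw [← hVx_dd x]; exact h)
    rwa [← hVx_dd x] at h2
  -- split the (shifted) roots according to distance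
  set Mb : Multiset L := M.filter (fun x => δ ≤ (Vc W).toFun x) with hMb
  set Ms : Multiset L := M.filter (fun x => ¬ δ ≤ (Vc W).toFun x) with hMs
  have hMsplit : Mb + Ms = M := Multiset.filter_add_not _ M
  set b : ℕ := Multiset.card Mb with hb
  set S0 : WithTop Γ := (Ms.map (Vc W).toFun).sum with hS0
  have hS0top : S0 ≠ ⊤ := by
    refine msum_ne_top fun y hy => ?_
    obtain ⟨z, hz, rfl⟩ := Multiset.mem_map.mp hy
    exact ne_top_of_lt (not_le.mp (Multiset.mem_filter.mp hz).2)
  have hb1 : 1 ≤ b := by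
    have h0M : (0 : L) ∈ M := Multiset.mem_map.mpr ⟨α, hα, sub_self α⟩
    have h0Mb : (0 : L) ∈ Mb := Multiset.mem_filter.mpr ⟨h0M, by
      rw [(Vc W).map_zero']; exact le_top⟩
    rw [hb]
    exact Multiset.card_pos.mpr fun h => by simp [h] at h0Mb
  set Pb : Polynomial L := ((Mb.map fun x => X - C x).prod) with hPb
  set Ps : Polynomial L := ((Ms.map fun x => X - C x).prod) with hPs
  obtain ⟨lb1, lb2, lb3⟩ := LB (Vc W) δ Mb (fun x hx => (Multiset.mem_filter.mp hx).2)
  obtain ⟨ls1, ls2⟩ := LS (Vc W) δ hδtop Ms (fun x hx => not_le.mp (Multiset.mem_filter.mp hx).2)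
  have hLSge : ∀ j : ℕ, S0 ≤ (Vc W).toFun (Ps.coeff j) + j • δ := by
    intro j
    rcases Nat.eq_zero_or_pos j with h | h
    · subst h
      rw [zero_smul, add_zero, ls1]
    · exact (ls2 j h).le
  -- Taylor expansion of F at α
  set G : Polynomial L := taylor α F with hG
  have hGeq : G = C c * (M.map fun x => X - C x).prod := by
    rw [hG, taylor_apply, hsplit, mul_comp, C_comp, multiset_prod_comp']
    congr 1
    rw [hM, Multiset.map_map, Multiset.map_map]
    refine congrArg _ (Multiset.map_congr rfl ?_)
    intro β hβ
    show (X - C β).comp (X + C α) = X - C (β - α)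
    rw [sub_comp, X_comp, C_comp, map_sub]
    ring
  have hQsplit : (M.map fun x => X - C x).prod = Pb * Ps := by
    rw [← hMsplit, Multiset.map_add, Multiset.prod_add]
  have hGcoeff : ∀ m : ℕ, G.coeff m = c * (Pb * Ps).coeff m := by
    intro m; rw [hGeq, hQsplit, coeff_C_mul]
  -- value of F
  have hWF : W.toFun F = (Vc W).toFun c + (b • δ + S0) := by
    have h1 : W.toFun F = (Vc W).toFun c + (R.map (dd W)).sum := by
      rw [hsplit, W.map_mul', W.vprod, Multiset.map_map]
      rfl
    have h2 : R.map (dd W) = M.map (fun x => dd W (x + α)) := by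
      rw [hM, Multiset.map_map]
      refine (Multiset.map_congr rfl ?_)
      intro β hβ
      show dd W β = dd W (β - α + α)
      rw [sub_add_cancel]
    have h3 : (M.map fun x => dd W (x + α)).sum = b • δ + S0 := by
      rw [← hMsplit, Multiset.map_add, Multiset.sum_add]
      congr 1
      · have h4 : Mb.map (fun x => dd W (x + α)) = Mb.map (fun _ => δ) :=
          Multiset.map_congr rfl fun x hx =>
            hdd_big x (Multiset.mem_filter.mp hx).1 (Multiset.mem_filter.mp hx).2
        rw [h4, Multiset.map_const', Multiset.sum_replicate]
      · rw [hS0]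
        refine congrArg _ (Multiset.map_congr rfl ?_)
        intro x hx
        exact hdd_small x (not_le.mp (Multiset.mem_filter.mp hx).2)
    rw [h1, h2, h3]
  -- D1 : exact value of the b-th coefficient of the Taylor expansion
  have hD1 : (Vc W).toFun ((Pb * Ps).coeff b) = S0 := by
    rw [coeff_mul]
    have hmem : ((b, 0) : ℕ × ℕ) ∈ Finset.HasAntidiagonal.antidiagonal b := by
      rw [Finset.HasAntidiagonal.mem_antidiagonal]
      simp
    have hval0 : (Vc W).toFun (Pb.coeff (b, 0).1 * Ps.coeff (b, 0).2) = S0 := by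
      show (Vc W).toFun (Pb.coeff b * Ps.coeff 0) = S0
      rw [hb, lb2, one_mul, ls1]
    rw [(Vc W).vsum_eq (Finset.HasAntidiagonal.antidiagonal b) _ (b, 0) hmem ?_ (by rw [hval0]; exact hS0top),
      hval0]
    intro p hp hne
    have hpb : p.1 + p.2 = b := Finset.HasAntidiagonal.mem_antidiagonal.mp hp
    have hp1 : p.1 ≤ b := by omega
    have hp2 : 1 ≤ p.2 := by
      rcases Nat.eq_zero_or_pos p.2 with h | h
      · exact absurd (Prod.ext (by omega) h) hne
      · exact h
    rw [hval0]
    have hsub : Multiset.card Mb - p.1 = p.2 := by omega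
    calc S0 < (Vc W).toFun (Ps.coeff p.2) + p.2 • δ := ls2 p.2 hp2
      _ ≤ (Vc W).toFun (Ps.coeff p.2) + (Vc W).toFun (Pb.coeff p.1) := by
          refine add_le_add_right ?_ _
          have := lb1 p.1
          rwa [hsub] at this
      _ = (Vc W).toFun (Pb.coeff p.1 * Ps.coeff p.2) := by
          rw [(Vc W).map_mul', add_comm]
  -- D2
  have hD2 : ∀ m : ℕ, W.toFun F ≤ (Vc W).toFun (G.coeff m) + m • δ := by
    intro m
    rw [hGcoeff m, (Vc W).map_mul', hWF, add_assoc]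
    refine add_le_add_right ?_ _
    rw [coeff_mul]
    refine (Vc W).vsum_le_add _ _ _ _ ?_
    intro p hp
    have hpb : p.1 + p.2 = m := Finset.HasAntidiagonal.mem_antidiagonal.mp hp
    rcases Nat.lt_or_ge b p.1 with h | h
    · rw [lb3 p.1 (by omega), zero_mul, (Vc W).map_zero', top_add]
      exact le_top
    · have h1 : (b - p.1) • δ ≤ (Vc W).toFun (Pb.coeff p.1) := by
        have := lb1 p.1
        rwa [← hb] at this
      have h2 : S0 ≤ (Vc W).toFun (Ps.coeff p.2) + p.2 • δ := hLSge p.2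
      calc b • δ + S0 = ((b - p.1) • δ + p.1 • δ) + S0 := by
            rw [← add_nsmul, Nat.sub_add_cancel h]
        _ ≤ ((Vc W).toFun (Pb.coeff p.1) + p.1 • δ)
              + ((Vc W).toFun (Ps.coeff p.2) + p.2 • δ) := add_le_add (add_le_add_left h1 _) h2
        _ = (Vc W).toFun (Pb.coeff p.1 * Ps.coeff p.2) + (p.1 + p.2) • δ := by
            rw [(Vc W).map_mul', add_nsmul]
            abel
        _ = (Vc W).toFun (Pb.coeff p.1 * Ps.coeff p.2) + m • δ := by rw [hpb]
  -- D3
  have hD3 : ∀ i : ℕ, 1 ≤ i → ∀ t : WithTop Γ, δ ≤ t →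
      (Vc W).toFun c + S0 < (Vc W).toFun (G.coeff (b + i)) + i • t := by
    intro i hi t ht
    have key : S0 < (Vc W).toFun ((Pb * Ps).coeff (b + i)) + i • t := by
      rw [coeff_mul]
      refine (Vc W).vsum_lt_add _ _ _ _ hS0top ?_
      intro p hp
      have hpb : p.1 + p.2 = b + i := Finset.HasAntidiagonal.mem_antidiagonal.mp hp
      rcases Nat.lt_or_ge b p.1 with h | h
      · rw [lb3 p.1 (by omega), zero_mul, (Vc W).map_zero', top_add]
        exact lt_top_iff_ne_top.mpr hS0top
      · have hp2 : 1 ≤ p.2 := by omega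
        have h1 : (b - p.1) • δ ≤ (Vc W).toFun (Pb.coeff p.1) := by
          have := lb1 p.1
          rwa [← hb] at this
        calc S0 < (Vc W).toFun (Ps.coeff p.2) + p.2 • δ := ls2 p.2 hp2
          _ = (Vc W).toFun (Ps.coeff p.2) + ((b - p.1) + i) • δ := by
              rw [show b - p.1 + i = p.2 by omega]
          _ = (Vc W).toFun (Ps.coeff p.2) + ((b - p.1) • δ + i • δ) := by rw [add_nsmul]
          _ ≤ (Vc W).toFun (Ps.coeff p.2) + ((Vc W).toFun (Pb.coeff p.1) + i • t) :=
              add_le_add_right (add_le_add h1 (nsmul_le_nsmul_right ht i)) _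
          _ = (Vc W).toFun (Pb.coeff p.1 * Ps.coeff p.2) + i • t := by
              rw [(Vc W).map_mul']
              abel
    calc (Vc W).toFun c + S0
        < (Vc W).toFun c + ((Vc W).toFun ((Pb * Ps).coeff (b + i)) + i • t) :=
          WithTop.add_lt_add_left hVc key
      _ = (Vc W).toFun (G.coeff (b + i)) + i • t := by
          rw [hGcoeff, (Vc W).map_mul', add_assoc]
  -- Taylor coefficients of Hasse derivatives
  have hTay : ∀ (mm i : ℕ),
      (taylor α (hasseDeriv mm F)).coeff i = (i + mm).choose i • (taylor α F).coeff (i + mm) := by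
    intro mm i
    rw [taylor_coeff, taylor_coeff]
    have hcomp := LinearMap.congr_fun (hasseDeriv_comp (R := L) i mm) F
    simp only [LinearMap.coe_comp, Function.comp_apply, LinearMap.smul_apply] at hcomp
    rw [hcomp, nsmul_eq_mul, nsmul_eq_mul, eval_mul, eval_natCast]
  have hVGb : (Vc W).toFun (G.coeff b) = (Vc W).toFun c + S0 := by
    rw [hGcoeff, (Vc W).map_mul', hD1]
  have hGb0 : G.coeff b ≠ 0 :=
    (Vc W).ne_zero (by rw [hVGb]; exact WithTop.add_ne_top.mpr ⟨hVc, hS0top⟩)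
  have hEval : ∀ (p : Polynomial L) (β : L),
      p.eval β = ∑ i ∈ (taylor α p).support, (taylor α p).coeff i * (β - α) ^ i := by
    intro p β
    conv_lhs => rw [← sum_taylor_eq p α]
    rw [Polynomial.sum_def, eval_finset_sum]
    refine Finset.sum_congr rfl ?_
    intro i hi
    simp
  set HD : Polynomial L := hasseDeriv b F with hHD
  have hHD0coeff : (taylor α HD).coeff 0 = G.coeff b := by
    rw [hHD, hTay b 0]
    simp [hG]
  have hHDne : HD ≠ 0 := by
    intro h
    rw [h] at hHD0coeff
    simp only [map_zero, coeff_zero] at hHD0coeff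
    exact hGb0 hHD0coeff.symm
  have hnoroot : ∀ β ∈ HD.roots, (Vc W).toFun (β - α) < δ := by
    intro β hβ
    by_contra hcon
    push_neg at hcon
    have heval0 : HD.eval β = 0 := (Polynomial.mem_roots'.mp hβ).2
    set g : ℕ → L := fun i => (taylor α HD).coeff i * (β - α) ^ i with hgdef
    have hg0 : g 0 = G.coeff b := by
      show (taylor α HD).coeff 0 * (β - α) ^ 0 = G.coeff b
      rw [pow_zero, mul_one, hHD0coeff]
    have hvg0top : (Vc W).toFun (G.coeff b) ≠ ⊤ := by
      rw [hVGb]; exact WithTop.add_ne_top.mpr ⟨hVc, hS0top⟩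
    have h0mem : 0 ∈ (taylor α HD).support := by
      rw [Polynomial.mem_support_iff, hHD0coeff]; exact hGb0
    have hstrict : ∀ i ∈ (taylor α HD).support, i ≠ 0 →
        (Vc W).toFun (g 0) < (Vc W).toFun (g i) := by
      intro i hisup hi0
      have hi1 : 1 ≤ i := Nat.one_le_iff_ne_zero.mpr hi0
      rw [hg0]
      have hup : (Vc W).toFun (G.coeff (b + i)) + i • ((Vc W).toFun (β - α))
          ≤ (Vc W).toFun ((taylor α HD).coeff i * (β - α) ^ i) := by
        rw [(Vc W).map_mul', (Vc W).vpow, hHD, hTay b i]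
        refine add_le_add_left ?_ _
        rw [show i + b = b + i by omega]
        exact (Vc W).vnsmul_ge _ _
      calc (Vc W).toFun (G.coeff b) = (Vc W).toFun c + S0 := hVGb
        _ < (Vc W).toFun (G.coeff (b + i)) + i • ((Vc W).toFun (β - α)) :=
          hD3 i hi1 _ hcon
        _ ≤ _ := hup
    have hval := (Vc W).vsum_eq ((taylor α HD).support) g 0 h0mem hstrict
      (by rw [hg0]; exact hvg0top)
    have hsum : (∑ i ∈ (taylor α HD).support, g i) = HD.eval β := (hEval HD β).symm
    rw [hsum, heval0, (Vc W).map_zero', hg0] at hval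
    exact hvg0top hval.symm
  -- value of the b-th Hasse derivative
  have hWHD : W.toFun HD + b • δ = W.toFun F := by
    set cB : L := HD.leadingCoeff with hcB
    have hsplitHD : HD = C cB * (HD.roots.map fun β => X - C β).prod :=
      Splits.eq_prod_roots (IsAlgClosed.splits HD)
    have h1 : W.toFun HD = (Vc W).toFun cB + (HD.roots.map (fun β => (Vc W).toFun (β - α))).sum := by
      conv_lhs => rw [hsplitHD]
      rw [W.map_mul', W.vprod, Multiset.map_map]
      congr 1
      refine congrArg _ (Multiset.map_congr rfl ?_)
      intro β hβ
      show dd W β = (Vc W).toFun (β - α)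
      have := hdd_small (β - α) (hnoroot β hβ)
      rwa [sub_add_cancel] at this
    have h2 : HD.eval α = cB * ((HD.roots.map fun β => (α - β)).prod) := by
      conv_lhs => rw [hsplitHD]
      rw [eval_mul, eval_C, eval_multiset_prod, Multiset.map_map]
      congr 2
      refine Multiset.map_congr rfl ?_
      intro β hβ
      simp
    have h3 : (Vc W).toFun (HD.eval α)
        = (Vc W).toFun cB + (HD.roots.map (fun β => (Vc W).toFun (β - α))).sum := by
      rw [h2, (Vc W).map_mul', (Vc W).vprod, Multiset.map_map]
      congr 1
      refine congrArg _ (Multiset.map_congr rfl ?_)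
      intro β hβ
      show (Vc W).toFun (α - β) = (Vc W).toFun (β - α)
      rw [show α - β = -(β - α) by ring, (Vc W).vneg]
    have h4 : HD.eval α = G.coeff b := by
      rw [← hHD0coeff, taylor_coeff_zero]
    rw [h1, ← h3, h4, hVGb, hWF]
    abel
  -- UPPER bound for every Hasse derivative
  have hUpper : ∀ m : ℕ, W.toFun F ≤ W.toFun (hasseDeriv m F) + m • δ := by
    intro m
    have hexp : hasseDeriv m F = ∑ i ∈ (taylor α (hasseDeriv m F)).support,
        C ((taylor α (hasseDeriv m F)).coeff i) * (X - C α) ^ i := by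
      conv_lhs => rw [← sum_taylor_eq (hasseDeriv m F) α]
      rw [Polynomial.sum_def]
    have hmain := W.vsum_le_add ((taylor α (hasseDeriv m F)).support)
      (fun i => C ((taylor α (hasseDeriv m F)).coeff i) * (X - C α) ^ i)
      (W.toFun F) (m • δ) ?_
    · rw [← hexp] at hmain
      exact hmain
    · intro i hi
      have hterm : W.toFun (C ((taylor α (hasseDeriv m F)).coeff i) * (X - C α) ^ i)
          = (Vc W).toFun ((taylor α (hasseDeriv m F)).coeff i) + i • δ := by
        rw [W.map_mul', W.vpow]
        rfl
      rw [hterm, hTay m i]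
      calc W.toFun F ≤ (Vc W).toFun (G.coeff (i + m)) + (i + m) • δ := hD2 (i + m)
        _ ≤ (Vc W).toFun ((i + m).choose i • G.coeff (i + m)) + (i + m) • δ :=
            add_le_add_left ((Vc W).vnsmul_ge _ _) _
        _ = (Vc W).toFun ((i + m).choose i • (taylor α F).coeff (i + m)) + i • δ + m • δ := by
            rw [add_nsmul, ← add_assoc]
  exact ⟨⟨b, hb1, hHDne, hWHD⟩, hUpper⟩

end Core

end Aux

variable {K : Type*} [Field K] {Γ : Type*} [AddCommGroup Γ] [LinearOrder Γ] [IsOrderedAddMonoid Γ]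

section Bridge

theorem hasseDeriv_map' {K' L' : Type*} [Field K'] [Field L'] (φ : K' →+* L') (b : ℕ)
    (f : Polynomial K') : hasseDeriv b (f.map φ) = (hasseDeriv b f).map φ := by
  ext n
  rw [hasseDeriv_coeff, coeff_map, coeff_map, hasseDeriv_coeff, map_mul, map_natCast]

theorem delta_eq_max {L : Type*} [Field L] [Algebra K L]
    (W : ValOn (Polynomial L) Γ) (f : Polynomial K) {α : L}
    (hα : α ∈ (f.map (algebraMap K L)).roots)
    (hmax : ∀ β ∈ (f.map (algebraMap K L)).roots, dd W β ≤ dd W α) :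
    delta W f = ((dd W α : WithTop Γ) : WithBot (WithTop Γ)) := by
  refine le_antisymm ?_ ?_
  · refine Multiset.sup_le.mpr ?_
    intro x hx
    obtain ⟨β, hβ, rfl⟩ := Multiset.mem_map.mp hx
    exact WithBot.coe_le_coe.mpr (hmax β hβ)
  · exact Multiset.le_sup (Multiset.mem_map.mpr ⟨α, hα, rfl⟩)

end Bridge

/-- `δ(f)` does not depend on the choice of the common extension of
`w` and `v̄` to `K̄(X)`. -/
theorem delta_independent_of_common_extension
    {K : Type*} [Field K] {Γ : Type*} [AddCommGroup Γ] [LinearOrder Γ] [IsOrderedAddMonoid Γ]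
    {L : Type*} [Field L] [Algebra K L] [IsAlgClosure K L]
    (v : ValOn K Γ) (vbar : ValOn L Γ)
    (hvbar : ∀ c : K, vbar.toFun (algebraMap K L c) = v.toFun c)
    (w : ValOn (Polynomial K) Γ) (hext : Extends w v)
    (wbar₁ wbar₂ : ValOn (Polynomial L) Γ)
    (h₁ : IsCommonExt wbar₁ w vbar) (h₂ : IsCommonExt wbar₂ w vbar)
    (f : Polynomial K) (hf : f ≠ 0) :
    delta wbar₁ f = delta wbar₂ f := by
  classical
  have hACL : IsAlgClosed L := IsAlgClosure.isAlgClosed K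
  by_cases hdeg : f.natDegree = 0
  · obtain ⟨a, rfl⟩ : ∃ a, f = C a := ⟨f.coeff 0, Polynomial.eq_C_of_natDegree_eq_zero hdeg⟩
    simp [delta, Polynomial.map_C, Polynomial.roots_C]
  · set φ := algebraMap K L with hφ
    set F : Polynomial L := f.map φ with hF
    have hF0 : F ≠ 0 := by
      rw [hF, Polynomial.map_ne_zero_iff (RingHom.injective φ)]
      exact hf
    have hcard : Multiset.card F.roots = F.natDegree :=
      (Polynomial.splits_iff_card_roots).mp (IsAlgClosed.splits F)
    have hRne : F.roots ≠ 0 := by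
      intro h
      rw [h] at hcard
      simp only [Multiset.card_zero] at hcard
      rw [hF, Polynomial.natDegree_map] at hcard
      exact hdeg hcard.symm
    obtain ⟨α₁, hα₁, hmax₁⟩ := exists_max F.roots (dd wbar₁) hRne
    obtain ⟨α₂, hα₂, hmax₂⟩ := exists_max F.roots (dd wbar₂) hRne
    obtain ⟨⟨b₁, hb₁, hne₁, heq₁⟩, hup₁⟩ := core wbar₁ F α₁ hα₁ hmax₁
    obtain ⟨⟨b₂, hb₂, hne₂, heq₂⟩, hup₂⟩ := core wbar₂ F α₂ hα₂ hmax₂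
    have hWW : ∀ b : ℕ, wbar₁.toFun (hasseDeriv b F) = wbar₂.toFun (hasseDeriv b F) := by
      intro b
      rw [hF, hasseDeriv_map', h₁.1, h₂.1]
    have hFF : wbar₁.toFun F = wbar₂.toFun F := by rw [hF, h₁.1, h₂.1]
    have cancel : ∀ (A x y : WithTop Γ), A ≠ ⊤ → A + x ≤ A + y → x ≤ y := by
      intro A x y hA h
      exact (WithTop.add_le_add_iff_left hA).mp h
    have smul_cancel : ∀ (b : ℕ), 1 ≤ b → ∀ x y : WithTop Γ, y ≠ ⊤ →
        b • x ≤ b • y → x ≤ y := by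
      intro b hb x y hy h
      by_contra hc
      push_neg at hc
      rcases eq_or_ne x ⊤ with rfl | hx
      · have h1 : b • y ≠ ⊤ := nsmul_ne_top hy b
        have h2 : b • (⊤ : WithTop Γ) = ⊤ := by
          cases b with
          | zero => omega
          | succ n => rw [succ_nsmul]; simp
        rw [h2] at h
        exact absurd (top_le_iff.mp h) h1
      · exact absurd h (not_le.mpr (nsmul_lt_nsmul hx hc hb))
    have hle12 : dd wbar₁ α₁ ≤ dd wbar₂ α₂ := by
      refine smul_cancel b₁ hb₁ _ _ (dd_ne_top wbar₂ α₂) ?_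
      refine cancel (wbar₂.toFun (hasseDeriv b₁ F)) _ _ (wbar₂.ne_top' _ hne₁) ?_
      calc wbar₂.toFun (hasseDeriv b₁ F) + b₁ • dd wbar₁ α₁
          = wbar₁.toFun (hasseDeriv b₁ F) + b₁ • dd wbar₁ α₁ := by rw [hWW b₁]
        _ = wbar₁.toFun F := heq₁
        _ = wbar₂.toFun F := hFF
        _ ≤ wbar₂.toFun (hasseDeriv b₁ F) + b₁ • dd wbar₂ α₂ := hup₂ b₁
    have hle21 : dd wbar₂ α₂ ≤ dd wbar₁ α₁ := by
      refine smul_cancel b₂ hb₂ _ _ (dd_ne_top wbar₁ α₁) ?_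
      refine cancel (wbar₁.toFun (hasseDeriv b₂ F)) _ _ (wbar₁.ne_top' _ hne₂) ?_
      calc wbar₁.toFun (hasseDeriv b₂ F) + b₂ • dd wbar₂ α₂
          = wbar₂.toFun (hasseDeriv b₂ F) + b₂ • dd wbar₂ α₂ := by rw [hWW b₂]
        _ = wbar₂.toFun F := heq₂
        _ = wbar₁.toFun F := hFF.symm
        _ ≤ wbar₁.toFun (hasseDeriv b₂ F) + b₂ • dd wbar₁ α₁ := hup₁ b₂
    have hdd : dd wbar₁ α₁ = dd wbar₂ α₂ := le_antisymm hle12 hle21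
    rw [delta_eq_max wbar₁ f hα₁ hmax₁, delta_eq_max wbar₂ f hα₂ hmax₂, hdd]

end MLV
end
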